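/- Karlin–Novikov criterion: let X, Y be nonnegative random variables with finite means and distribution functions F, G. Suppose E[X] ≤ E[Y] and there exists t₀ ≥ 0 such that F(t) ≤ G(t) for all t ≤ t₀ and F(t) ≥ G(t) for all t ≥ t₀. Then X ≤_icx Y, i.e., F^SL(t) ≤ G^SL(t) for all t ≥ 0. -/

import Mathlib

open MeasureTheory Set

lemma kn_aux {Ω : Type*} [MeasurableSpace Ω] (μ : Measure Ω) [IsProbabilityMeasure μ]
    (X : Ω → ℝ) (hX0 : ∀ ω, 0 ≤ X ω) (hXint : Integrable X μ) :
    IntegrableOn (fun x => (μ {ω | x < X ω}).toReal) (Ioi (0:ℝ)) ∧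
      ∫ ω, X ω ∂μ = ∫ x in Ioi (0:ℝ), (μ {ω | x < X ω}).toReal := by
  have hnn : 0 ≤ᵐ[μ] X := Filter.Eventually.of_forall hX0
  have hanti : Antitone (fun x : ℝ => μ {ω | x < X ω}) :=
    fun s t hst => measure_mono (fun ω h => lt_of_le_of_lt hst h)
  have hmble : Measurable fun x : ℝ => (μ {ω | x < X ω}).toReal :=
    hanti.measurable.ennreal_toReal
  have key := lintegral_eq_lintegral_meas_lt μ hnn hXint.aemeasurable
  refine ⟨⟨hmble.aestronglyMeasurable.restrict, ?_⟩,
    hXint.integral_eq_integral_meas_lt hnn⟩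
  rw [hasFiniteIntegral_iff_ofReal (Filter.Eventually.of_forall fun x => ENNReal.toReal_nonneg)]
  have hcongr : ∫⁻ x in Ioi (0:ℝ), ENNReal.ofReal ((μ {ω | x < X ω}).toReal)
      = ∫⁻ x in Ioi (0:ℝ), μ {ω | x < X ω} := by
    apply setLIntegral_congr_fun measurableSet_Ioi
    exact fun x _ => ENNReal.ofReal_toReal (measure_ne_top μ _)
  rw [hcongr, ← key]
  exact hXint.lintegral_lt_top

/-- Karlin–Novikov criterion: if `E[X] ≤ E[Y]` and there is a `t₀ ≥ 0` such that
`F(t) ≤ G(t)` for `t ≤ t₀` and `F(t) ≥ G(t)` for `t ≥ t₀`, then `X ≤_icx Y`,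
i.e. `F^SL(t) ≤ G^SL(t)` for all `t ≥ 0`. -/
theorem karlin_novikov
    {Ω : Type*} [MeasurableSpace Ω] (μ : Measure Ω) [IsProbabilityMeasure μ]
    (X Y : Ω → ℝ) (hXm : Measurable X) (hYm : Measurable Y)
    (hX0 : ∀ ω, 0 ≤ X ω) (hY0 : ∀ ω, 0 ≤ Y ω)
    (hXint : Integrable X μ) (hYint : Integrable Y μ)
    (F G : ℝ → ℝ)
    (hF : ∀ x, F x = (μ {ω | X ω ≤ x}).toReal)
    (hG : ∀ x, G x = (μ {ω | Y ω ≤ x}).toReal)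
    (hmean : ∫ ω, X ω ∂μ ≤ ∫ ω, Y ω ∂μ)
    (hcross : ∃ t₀ : ℝ, 0 ≤ t₀ ∧
      (∀ t ≤ t₀, F t ≤ G t) ∧ (∀ t, t₀ ≤ t → G t ≤ F t)) :
    ∀ t : ℝ, 0 ≤ t →
      ∫ x in Ioi t, (1 - F x) ≤ ∫ x in Ioi t, (1 - G x) := by
  obtain ⟨t₀, ht₀, hle, hge⟩ := hcross
  set f : ℝ → ℝ := fun x => (μ {ω | x < X ω}).toReal with hf_def
  set g : ℝ → ℝ := fun x => (μ {ω | x < Y ω}).toReal with hg_def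
  have compl_eq : ∀ (Z : Ω → ℝ) (hZm : Measurable Z) (x : ℝ),
      (μ {ω | x < Z ω}).toReal = 1 - (μ {ω | Z ω ≤ x}).toReal := by
    intro Z hZm x
    have hc : {ω | x < Z ω} = {ω | Z ω ≤ x}ᶜ := by ext ω; simp [not_le]
    rw [hc, measure_compl (measurableSet_le hZm measurable_const) (measure_ne_top μ _),
      measure_univ, ENNReal.toReal_sub_of_le prob_le_one ENNReal.one_ne_top, ENNReal.toReal_one]
  have hFf : (fun x => 1 - F x) = f := by
    funext x; rw [hF x, hf_def]; simp only; rw [compl_eq X hXm x]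
  have hGg : (fun x => 1 - G x) = g := by
    funext x; rw [hG x, hg_def]; simp only; rw [compl_eq Y hYm x]
  obtain ⟨hfInt, hfEq⟩ := kn_aux μ X hX0 hXint
  obtain ⟨hgInt, hgEq⟩ := kn_aux μ Y hY0 hYint
  have hfg : ∀ x, t₀ ≤ x → f x ≤ g x := by
    intro x hx
    have h1 : G x ≤ F x := hge x hx
    have := congrFun hFf x
    have := congrFun hGg x
    try simp only at *
    linarith
  have hgf : ∀ x, 0 ≤ x → x ≤ t₀ → g x ≤ f x := by
    intro x _ hx
    have h1 : F x ≤ G x := hle x hx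
    have := congrFun hFf x
    have := congrFun hGg x
    try simp only at *
    linarith
  intro t ht
  rw [hFf, hGg]
  rcases le_total t₀ t with hcase | hcase
  · -- t₀ ≤ t: pointwise comparison on Ioi t
    have hsub : Ioi t ⊆ Ioi (0:ℝ) := Ioi_subset_Ioi ht
    refine setIntegral_mono_on (hfInt.mono_set hsub) (hgInt.mono_set hsub)
      measurableSet_Ioi ?_
    intro x hx
    exact hfg x (le_of_lt (lt_of_le_of_lt hcase hx))
  · -- t ≤ t₀: split Ioi 0 = Ioc 0 t ∪ Ioi t
    have hunion : Ioc (0:ℝ) t ∪ Ioi t = Ioi 0 := Ioc_union_Ioi_eq_Ioi ht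
    have hdisj : Disjoint (Ioc (0:ℝ) t) (Ioi t) := Ioc_disjoint_Ioi le_rfl
    have hsplit : ∀ (h : ℝ → ℝ), IntegrableOn h (Ioi (0:ℝ)) →
        ∫ x in Ioi (0:ℝ), h x = (∫ x in Ioc (0:ℝ) t, h x) + ∫ x in Ioi t, h x := by
      intro h hint
      rw [← hunion] at hint ⊢
      exact setIntegral_union hdisj measurableSet_Ioi
        (hint.mono_set subset_union_left) (hint.mono_set subset_union_right)
    have hf1 := hsplit f hfInt
    have hg1 := hsplit g hgInt
    have hIoc : ∫ x in Ioc (0:ℝ) t, g x ≤ ∫ x in Ioc (0:ℝ) t, f x := by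
      refine setIntegral_mono_on (hgInt.mono_set ?_) (hfInt.mono_set ?_)
        measurableSet_Ioc ?_
      · rw [← hunion]; exact subset_union_left
      · rw [← hunion]; exact subset_union_left
      · intro x hx
        exact hgf x (le_of_lt hx.1) (le_trans hx.2 hcase)
    have hEX : ∫ ω, X ω ∂μ = (∫ x in Ioc (0:ℝ) t, f x) + ∫ x in Ioi t, f x := by
      rw [hfEq]; exact hf1
    have hEY : ∫ ω, Y ω ∂μ = (∫ x in Ioc (0:ℝ) t, g x) + ∫ x in Ioi t, g x := by
      rw [hgEq]; exact hg1
    linarith
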